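/- Let E be a k-coloured graph and C a complete, associative collection of squares such that the associated k-graph Λ = Λ_{(E,C)} is row-finite with no sources. Let π: E^{∞,k} → Λ^∞ be the map sending a k-infinite coloured path to the infinite path it traverses. Then a subset U ⊆ Λ^∞ is open (in the cylinder-set topology) if and only if π^{-1}(U) is open in E^{∞,k}; i.e., Λ^∞ carries the quotient topology induced by π. -/

import Mathlib

namespace Paper


/-- A `k`-coloured (directed) graph. -/
structure ColouredGraph (k : ℕ) where
  V : Type
  E : Type
  r : E → V
  s : E → V
  c : E → Fin k

variable {k : ℕ}

/-- The model grid `E_{k,m}`: vertices `{n ≤ m}`, an edge of colour `i`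
from `n + e_i` to `n` whenever `n + e_i ≤ m`. -/
def grid (k : ℕ) (m : Fin k → ℕ) : ColouredGraph k where
  V := {n : Fin k → ℕ // n ≤ m}
  E := {p : (Fin k → ℕ) × Fin k // p.1 + Pi.single p.2 1 ≤ m}
  r e := ⟨e.1.1, le_trans (le_add_of_nonneg_right zero_le) e.2⟩
  s e := ⟨e.1.1 + Pi.single e.1.2 1, e.2⟩
  c e := e.1.2

/-- A coloured-graph morphism. -/
structure CGM (E F : ColouredGraph k) where
  onV : E.V → F.V
  onE : E.E → F.E
  r_comm : ∀ e, F.r (onE e) = onV (E.r e)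
  s_comm : ∀ e, F.s (onE e) = onV (E.s e)
  c_comm : ∀ e, F.c (onE e) = E.c e

/-- Composition of coloured-graph morphisms. -/
def CGM.compose {E F G : ColouredGraph k} (g : CGM F G) (f : CGM E F) : CGM E G where
  onV := g.onV ∘ f.onV
  onE := g.onE ∘ f.onE
  r_comm e := by simp [Function.comp, g.r_comm, f.r_comm]
  s_comm e := by simp [Function.comp, g.s_comm, f.s_comm]
  c_comm e := by simp [Function.comp, g.c_comm, f.c_comm]

/-- The range `λ(0)` of a coloured-graph morphism defined on a grid. -/
def gRng {E : ColouredGraph k} {m : Fin k → ℕ} (lam : CGM (grid k m) E) : E.V :=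
  lam.onV ⟨0, zero_le⟩

/-- The source `λ(m)` of a coloured-graph morphism defined on a grid. -/
def gSrc {E : ColouredGraph k} {m : Fin k → ℕ} (lam : CGM (grid k m) E) : E.V :=
  lam.onV ⟨m, le_refl m⟩

/-- The translated restriction `λ|*_{[p, p+m']}` of `λ : E_{k,M} → E`. -/
def restrictTo {E : ColouredGraph k} {M : Fin k → ℕ} (lam : CGM (grid k M) E)
    (p m' : Fin k → ℕ) (h : p + m' ≤ M) : CGM (grid k m') E where
  onV n := lam.onV ⟨p + n.1, le_trans (add_le_add (le_refl p) n.2) h⟩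
  onE e := lam.onE ⟨(p + e.1.1, e.1.2), by
    rw [add_assoc]; exact le_trans (add_le_add (le_refl p) e.2) h⟩
  r_comm e := lam.r_comm _
  s_comm e := by
    refine (lam.s_comm _).trans ?_
    exact congrArg lam.onV (Subtype.ext (add_assoc p e.1.1 _))
  c_comm e := lam.c_comm _

/-- A coloured-graph morphism from some grid into `E`, bundled with its degree. -/
def MorphOf (E : ColouredGraph k) : Type := Σ m : Fin k → ℕ, CGM (grid k m) E

/-- The shape (abelianized colouring) of a finite path, as an element of `ℕ^k`. -/
def colourVec (E : ColouredGraph k) (x : List E.E) : Fin k → ℕ :=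
  (x.map (fun e => Pi.single (E.c e) 1)).sum

/-- A list of edges is a path when consecutive edges are composable. -/
def IsPathList (E : ColouredGraph k) (x : List E.E) : Prop :=
  x.Chain' (fun e f => E.s e = E.r f)

/-- `x` traverses `λ`: the edges of `x` match those of `λ` along the staircase
determined by the colour sequence of `x`. -/
def Traverses {E : ColouredGraph k} {m : Fin k → ℕ} (lam : CGM (grid k m) E)
    (x : List E.E) : Prop :=
  colourVec E x = m ∧ ∀ (l : ℕ) (hl : l < x.length),
    ∃ h : colourVec E (x.take l) + Pi.single (E.c (x.get ⟨l, hl⟩)) 1 ≤ m,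
      lam.onE ⟨(colourVec E (x.take l), E.c (x.get ⟨l, hl⟩)), h⟩ = x.get ⟨l, hl⟩

/-- A bundled grid morphism is a square when its degree is `e_i + e_j` with `i ≠ j`. -/
def IsSquarePair {E : ColouredGraph k} (φ : MorphOf E) : Prop :=
  ∃ i j : Fin k, i ≠ j ∧ φ.1 = Pi.single i 1 + Pi.single j 1

/-- A complete collection of squares. -/
def Complete (E : ColouredGraph k) (C : Set (MorphOf E)) : Prop :=
  (∀ φ ∈ C, IsSquarePair φ) ∧
  ∀ e f : E.E, E.s e = E.r f → E.c e ≠ E.c f →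
    ∃! φ : MorphOf E, φ ∈ C ∧ Traverses φ.2 [e, f]

/-- `CRel C e f f' e'` means `ef ∼_C f'e'`: the paths `ef` and `f'e'` traverse a
common square of `C`, with `f'` of the colour of `f` and `e'` of the colour of `e`. -/
def CRel (E : ColouredGraph k) (C : Set (MorphOf E)) (e f f' e' : E.E) : Prop :=
  E.c f' = E.c f ∧ E.c e' = E.c e ∧
  ∃ φ ∈ C, Traverses φ.2 [e, f] ∧ Traverses φ.2 [f', e']

/-- Associativity of a complete collection of squares. -/
def Associative (E : ColouredGraph k) (C : Set (MorphOf E)) : Prop :=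
  ∀ f g h f1 f2 g1 g2 h1 h2 f1' f2' g1' g2' h1' h2' : E.E,
    E.s f = E.r g → E.s g = E.r h →
    E.c f ≠ E.c g → E.c g ≠ E.c h → E.c f ≠ E.c h →
    CRel E C f g g1' f1' → CRel E C f1' h h1' f2' → CRel E C g1' h1' h2' g2' →
    CRel E C g h h1 g1 → CRel E C f h1 h2 f1 → CRel E C f1 g1 g2 f2 →
    f2 = f2' ∧ g2 = g2' ∧ h2 = h2'

/-- `λ` is `C`-compatible: every square occurring in `λ` belongs to `C`. -/
def CComp (E : ColouredGraph k) (C : Set (MorphOf E)) {M : Fin k → ℕ}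
    (lam : CGM (grid k M) E) : Prop :=
  ∀ (p : Fin k → ℕ) (i j : Fin k), i ≠ j →
    ∀ h : p + (Pi.single i 1 + Pi.single j 1) ≤ M,
      (⟨Pi.single i 1 + Pi.single j 1,
        restrictTo lam p (Pi.single i 1 + Pi.single j 1) h⟩ : MorphOf E) ∈ C

/-- A finite path in a coloured graph, remembering its range vertex (so that
length-zero paths are vertices). -/
structure FinPath (E : ColouredGraph k) where
  rng : E.V
  edges : List E.E
  chain : edges.Chain' (fun e f => E.s e = E.r f)
  head_rng : ∀ e ∈ edges.head?, E.r e = rng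

/-- Source vertex of a finite path. -/
def FinPath.src {E : ColouredGraph k} (x : FinPath E) : E.V :=
  (x.edges.getLast?).elim x.rng E.s

/-- One application of a commuting square: replace a consecutive bicoloured pair
by its `C`-equivalent pair. -/
def SwapStep (E : ColouredGraph k) (C : Set (MorphOf E)) (x y : List E.E) : Prop :=
  ∃ (l r : List E.E) (e f f' e' : E.E),
    x = l ++ e :: f :: r ∧ y = l ++ f' :: e' :: r ∧ CRel E C e f f' e'

/-- The relation on finite paths generating the equivalence `∼`. -/
def PathRel (E : ColouredGraph k) (C : Set (MorphOf E)) (x y : FinPath E) : Prop :=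
  x.rng = y.rng ∧ SwapStep E C x.edges y.edges


lemma tsub_chain_bound {k : ℕ} {p q r : Fin k → ℕ} (h1 : p ≤ q) (h2 : q ≤ r) :
    (q - p) + (r - q) ≤ r - p := by
  rw [Pi.le_def]
  intro i
  have hi1 : p i ≤ q i := h1 i
  have hi2 : q i ≤ r i := h2 i
  simp only [Pi.add_apply, Pi.sub_apply]
  omega

lemma tsub_le_restrict {k : ℕ} {p q r : Fin k → ℕ} (h1 : p ≤ q) (h2 : q ≤ r) :
    (0 : Fin k → ℕ) + (q - p) ≤ r - p := by
  rw [zero_add]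
  exact tsub_le_tsub_right h2 p

/-- An infinite path in `Λ_{(E,C)}`: a coherent family of `C`-compatible
coloured-graph morphisms `x(p,q) : E_{k,q-p} → E` for `p ≤ q`. -/
structure LamInfPath (E : ColouredGraph k) (C : Set (MorphOf E)) where
  seg : ∀ p q : Fin k → ℕ, p ≤ q → CGM (grid k (q - p)) E
  ccomp : ∀ p q h, CComp E C (seg p q h)
  coh1 : ∀ (p q r : Fin k → ℕ) (h1 : p ≤ q) (h2 : q ≤ r),
    restrictTo (seg p r (h1.trans h2)) 0 (q - p) (tsub_le_restrict h1 h2) = seg p q h1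
  coh2 : ∀ (p q r : Fin k → ℕ) (h1 : p ≤ q) (h2 : q ≤ r),
    restrictTo (seg p r (h1.trans h2)) (q - p) (r - q) (tsub_chain_bound h1 h2) = seg q r h2

/-- The cylinder-set topology on `Λ^∞`, generated by the sets
`Z(μ) = {x : x(0,d(μ)) = μ}`. -/
def lamTop (E : ColouredGraph k) (C : Set (MorphOf E)) :
    TopologicalSpace (LamInfPath E C) :=
  TopologicalSpace.generateFrom
    {S | ∃ (m : Fin k → ℕ) (μ : CGM (grid k m) E),
      S = {x : LamInfPath E C |
        (⟨m - 0, x.seg 0 m (zero_le)⟩ : MorphOf E) = ⟨m, μ⟩}}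

/-- The space of infinite paths in `E` with infinitely many edges of every
colour. -/
def InfCPath (E : ColouredGraph k) : Type :=
  {x : ℕ → E.E // (∀ n, E.s (x n) = E.r (x (n + 1))) ∧
    ∀ i : Fin k, {n : ℕ | E.c (x n) = i}.Infinite}

/-- The cylinder topology on infinite coloured paths (subspace of the product
of discrete spaces). -/
def infTop (E : ColouredGraph k) : TopologicalSpace (InfCPath E) :=
  TopologicalSpace.induced (Subtype.val)
    (@Pi.topologicalSpace ℕ (fun _ => E.E) (fun _ => ⊥))

/-- The list of the first `n` edges of an infinite path. -/
def takeList {E : ColouredGraph k} (x : ℕ → E.E) (n : ℕ) : List E.E :=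
  List.ofFn (fun i : Fin n => x i)

section Aux
variable {k : ℕ} {E : ColouredGraph k}

/-- Abelianisation of a colour word. -/
def wVec (w : List (Fin k)) : Fin k → ℕ :=
  (w.map (fun i => Pi.single i 1)).sum

@[simp] lemma wVec_nil : wVec ([] : List (Fin k)) = 0 := rfl

@[simp] lemma wVec_cons (a : Fin k) (w : List (Fin k)) :
    wVec (a :: w) = Pi.single a 1 + wVec w := rfl

lemma wVec_append (u v : List (Fin k)) : wVec (u ++ v) = wVec u + wVec v := by
  simp [wVec, List.sum_append]

lemma colourVec_eq_wVec (x : List E.E) : colourVec E x = wVec (x.map E.c) := by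
  simp [colourVec, wVec, List.map_map, Function.comp_def]

lemma wVec_count (w : List (Fin k)) (i : Fin k) : wVec w i = w.count i := by
  induction w with
  | nil => simp
  | cons a t ih =>
    simp only [wVec_cons, Pi.add_apply, List.count_cons, ih, Pi.single_apply]
    by_cases h : i = a
    · subst h; simp [Nat.add_comm]
    · simp [h, Ne.symm h]

lemma wVec_replicate (n : ℕ) (i : Fin k) :
    wVec (List.replicate n i) = Pi.single i n := by
  induction n with
  | zero => simp
  | succ m ih =>
    rw [List.replicate_succ, wVec_cons, ih, ← Pi.single_add, Nat.add_comm]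

/-- A canonical colour word with a given abelianisation. -/
def wordOf (q : Fin k → ℕ) : List (Fin k) :=
  (List.finRange k).flatMap (fun i => List.replicate (q i) i)

lemma wVec_flatMap (l : List (Fin k)) (f : Fin k → List (Fin k)) :
    wVec (l.flatMap f) = (l.map (fun i => wVec (f i))).sum := by
  induction l with
  | nil => simp
  | cons a t ih => simp [List.flatMap_cons, wVec_append, ih]

lemma wVec_wordOf (q : Fin k → ℕ) : wVec (wordOf q) = q := by
  rw [wordOf, wVec_flatMap]
  have : ((List.finRange k).map fun i => wVec (List.replicate (q i) i)).sum
      = ∑ i : Fin k, Pi.single i (q i) := by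
    rw [Fin.sum_univ_def]
    congr 1
    apply List.map_congr_left
    intro i _
    exact wVec_replicate (q i) i
  rw [this, Finset.univ_sum_single]

lemma perm_of_wVec_eq {w w' : List (Fin k)} (h : wVec w = wVec w') : w.Perm w' := by
  rw [List.perm_iff_count]
  intro i
  rw [← wVec_count, ← wVec_count, h]

end Aux

section Aux2
variable {k : ℕ} {E : ColouredGraph k}

lemma gridE_eq {M : Fin k → ℕ} {q q' : Fin k → ℕ} {i i' : Fin k}
    (h1 : q = q') (h2 : i = i')
    (hq : q + Pi.single i 1 ≤ M) (hq' : q' + Pi.single i' 1 ≤ M) :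
    (⟨(q, i), hq⟩ : (grid k M).E) = ⟨(q', i'), hq'⟩ := by
  subst h1; subst h2; rfl

lemma CGM.ext' {F G : ColouredGraph k} {f g : CGM F G}
    (h1 : f.onV = g.onV) (h2 : f.onE = g.onE) : f = g := by
  cases f; cases g
  cases h1; cases h2
  rfl

lemma morphOf_snd_inj {a : Fin k → ℕ} {φ ψ : CGM (grid k a) E}
    (h : (⟨a, φ⟩ : MorphOf E) = ⟨a, ψ⟩) : φ = ψ := by
  exact eq_of_heq (Sigma.ext_iff.mp h).2

lemma morphOf_mk_eq {a b : Fin k → ℕ} (h : a = b) (φ : CGM (grid k a) E) :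
    (⟨a, φ⟩ : MorphOf E) = ⟨b, h ▸ φ⟩ := by subst h; rfl

lemma traverses_square {i j : Fin k}
    (φ : CGM (grid k (Pi.single i 1 + Pi.single j 1)) E)
    (h0 : (0 : Fin k → ℕ) + Pi.single i 1 ≤ Pi.single i 1 + Pi.single j 1)
    (h1 : Pi.single i 1 + Pi.single j 1 ≤ Pi.single i 1 + Pi.single j 1) :
    Traverses φ [φ.onE ⟨(0, i), h0⟩, φ.onE ⟨(Pi.single i 1, j), h1⟩] := by
  have hca : E.c (φ.onE ⟨(0, i), h0⟩) = i := φ.c_comm _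
  have hcb : E.c (φ.onE ⟨(Pi.single i 1, j), h1⟩) = j := φ.c_comm _
  constructor
  · simp [colourVec, hca, hcb]
  · intro l hl
    simp only [List.length_cons, List.length_nil] at hl
    interval_cases l
    · simp only [List.get_eq_getElem, List.getElem_cons_zero, List.take_zero]
      have hq : colourVec E ([] : List E.E) = 0 := rfl
      refine ⟨by rw [hq, hca]; exact h0, ?_⟩
      exact congrArg φ.onE (gridE_eq hq hca _ h0)
    · simp only [List.get_eq_getElem, List.getElem_cons_succ, List.getElem_cons_zero,
        List.take_succ_cons, List.take_zero]
      have hq : colourVec E [φ.onE ⟨(0, i), h0⟩] = Pi.single i 1 := by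
        simp [colourVec, hca]
      refine ⟨by rw [hq, hcb], ?_⟩
      exact congrArg φ.onE (gridE_eq hq hcb _ h1)

lemma square_det {C : Set (MorphOf E)} (hC : Complete E C) {M : Fin k → ℕ}
    {lam lam' : CGM (grid k M) E}
    (hc1 : CComp E C lam) (hc2 : CComp E C lam')
    {i j : Fin k} (hij : i ≠ j) {p : Fin k → ℕ}
    (hsq : p + (Pi.single i 1 + Pi.single j 1) ≤ M)
    (ha : ∀ h, lam.onE ⟨(p, i), h⟩ = lam'.onE ⟨(p, i), h⟩)
    (hb : ∀ h, lam.onE ⟨(p + Pi.single i 1, j), h⟩ =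
      lam'.onE ⟨(p + Pi.single i 1, j), h⟩) :
    (∀ h, lam.onE ⟨(p, j), h⟩ = lam'.onE ⟨(p, j), h⟩) ∧
    (∀ h, lam.onE ⟨(p + Pi.single j 1, i), h⟩ =
      lam'.onE ⟨(p + Pi.single j 1, i), h⟩) := by
  have hfit1 : p + Pi.single i 1 ≤ M :=
    le_trans (add_le_add (le_refl p) le_self_add) hsq
  have hfit2 : (p + Pi.single i 1) + Pi.single j 1 ≤ M := by
    rw [add_assoc]; exact hsq
  have hfit3 : p + Pi.single j 1 ≤ M :=
    le_trans (add_le_add (le_refl p) le_add_self) hsq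
  have hfit4 : (p + Pi.single j 1) + Pi.single i 1 ≤ M := by
    rw [add_assoc, add_comm (Pi.single j 1)]; exact hsq
  set φ := restrictTo lam p (Pi.single i 1 + Pi.single j 1) hsq with hφ
  set φ' := restrictTo lam' p (Pi.single i 1 + Pi.single j 1) hsq with hφ'
  have h0 : (0 : Fin k → ℕ) + Pi.single i 1 ≤ (Pi.single i 1 : Fin k → ℕ) + Pi.single j 1 := by
    rw [zero_add]; exact le_self_add
  have h1 : (Pi.single i 1 : Fin k → ℕ) + Pi.single j 1 ≤ Pi.single i 1 + Pi.single j 1 := le_rfl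
  -- identify the edges of the squares with edges of lam / lam'
  have he : φ.onE ⟨(0, i), h0⟩ = lam.onE ⟨(p, i), hfit1⟩ := by
    show lam.onE _ = _
    rw [gridE_eq (add_zero p) rfl _ hfit1]
  have hf : φ.onE ⟨(Pi.single i 1, j), h1⟩ = lam.onE ⟨(p + Pi.single i 1, j), hfit2⟩ := by
    show lam.onE _ = _
    rfl
  have he' : φ'.onE ⟨(0, i), h0⟩ = lam.onE ⟨(p, i), hfit1⟩ := by
    show lam'.onE _ = _
    rw [gridE_eq (add_zero p) rfl _ hfit1]
    exact (ha hfit1).symm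
  have hf' : φ'.onE ⟨(Pi.single i 1, j), h1⟩ = lam.onE ⟨(p + Pi.single i 1, j), hfit2⟩ := by
    show lam'.onE _ = _
    exact (hb hfit2).symm
  set e := lam.onE ⟨(p, i), hfit1⟩
  set f := lam.onE ⟨(p + Pi.single i 1, j), hfit2⟩
  have ht : Traverses φ [e, f] := by
    have := traverses_square (E := E) φ h0 h1
    rwa [he, hf] at this
  have ht' : Traverses φ' [e, f] := by
    have := traverses_square (E := E) φ' h0 h1
    rwa [he', hf'] at this
  have hsr : E.s e = E.r f := by
    exact (lam.s_comm _).trans (lam.r_comm ⟨(p + Pi.single i 1, j), hfit2⟩).symm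
  have hcc : E.c e ≠ E.c f := by
    exact fun hh => hij ((lam.c_comm _).symm.trans (hh.trans (lam.c_comm _)))
  obtain ⟨Ψ, hΨ, hUniq⟩ := hC.2 e f hsr hcc
  have hmem1 : (⟨Pi.single i 1 + Pi.single j 1, φ⟩ : MorphOf E) ∈ C := hc1 p i j hij hsq
  have hmem2 : (⟨Pi.single i 1 + Pi.single j 1, φ'⟩ : MorphOf E) ∈ C := hc2 p i j hij hsq
  have key : (⟨Pi.single i 1 + Pi.single j 1, φ⟩ : MorphOf E)
      = ⟨Pi.single i 1 + Pi.single j 1, φ'⟩ := by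
    rw [hUniq _ ⟨hmem1, ht⟩, hUniq _ ⟨hmem2, ht'⟩]
  have keyE : φ = φ' := morphOf_snd_inj key
  have hz1 : (0 : Fin k → ℕ) + Pi.single j 1 ≤ (Pi.single i 1 : Fin k → ℕ) + Pi.single j 1 := by
    rw [zero_add]; exact le_add_self
  have hz2 : (Pi.single j 1 : Fin k → ℕ) + Pi.single i 1 ≤ Pi.single i 1 + Pi.single j 1 :=
    le_of_eq (add_comm _ _)
  constructor
  · intro h
    have : φ.onE ⟨(0, j), hz1⟩ = φ'.onE ⟨(0, j), hz1⟩ := by rw [keyE]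
    show lam.onE ⟨(p, j), h⟩ = lam'.onE ⟨(p, j), h⟩
    calc lam.onE ⟨(p, j), h⟩ = lam.onE ⟨(p + 0, j), _⟩ :=
          (congrArg _ (gridE_eq (add_zero p) rfl _ h)).symm
      _ = φ.onE ⟨(0, j), hz1⟩ := rfl
      _ = φ'.onE ⟨(0, j), hz1⟩ := this
      _ = lam'.onE ⟨(p + 0, j), _⟩ := rfl
      _ = lam'.onE ⟨(p, j), h⟩ := congrArg _ (gridE_eq (add_zero p) rfl _ h)
  · intro h
    have : φ.onE ⟨(Pi.single j 1, i), hz2⟩ = φ'.onE ⟨(Pi.single j 1, i), hz2⟩ := by rw [keyE]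
    exact this

end Aux2

section Aux3
variable {k : ℕ} {E : ColouredGraph k}

/-- `lam` and `lam'` agree along the staircase starting at `p` with colour word `w`. -/
def Agree {M : Fin k → ℕ} (lam lam' : CGM (grid k M) E) :
    (Fin k → ℕ) → List (Fin k) → Prop
  | _, [] => True
  | p, a :: t => (∀ h, lam.onE ⟨(p, a), h⟩ = lam'.onE ⟨(p, a), h⟩) ∧
      Agree lam lam' (p + Pi.single a 1) t

lemma agree_congr {M : Fin k → ℕ} {lam lam' : CGM (grid k M) E}
    {p p' : Fin k → ℕ} (h : p = p') {w : List (Fin k)}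
    (hag : Agree lam lam' p w) : Agree lam lam' p' w := h ▸ hag

lemma agree_of_forall {M : Fin k → ℕ} {lam lam' : CGM (grid k M) E} :
    ∀ (w : List (Fin k)) (p : Fin k → ℕ),
      (∀ (l : ℕ) (hl : l < w.length) h,
        lam.onE ⟨(p + wVec (w.take l), w.get ⟨l, hl⟩), h⟩ =
        lam'.onE ⟨(p + wVec (w.take l), w.get ⟨l, hl⟩), h⟩) →
      Agree lam lam' p w := by
  intro w
  induction w with
  | nil => intro p _; trivial
  | cons a t ih =>
    intro p hyp
    constructor
    · intro h
      have h0 : p + wVec ((a :: t).take 0) + Pi.single ((a :: t).get ⟨0, by simp⟩) 1 ≤ M := by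
        simpa using h
      have := hyp 0 (by simp) h0
      calc lam.onE ⟨(p, a), h⟩
          = lam.onE ⟨(p + wVec ((a :: t).take 0), (a :: t).get ⟨0, by simp⟩), h0⟩ :=
            congrArg _ (gridE_eq (by simp) rfl _ _)
        _ = lam'.onE ⟨(p + wVec ((a :: t).take 0), (a :: t).get ⟨0, by simp⟩), h0⟩ := this
        _ = lam'.onE ⟨(p, a), h⟩ := congrArg _ (gridE_eq (by simp) rfl _ _)
    · apply ih
      intro l hl h
      have hidx : (p + Pi.single a 1) + wVec (t.take l) = p + wVec ((a :: t).take (l + 1)) := by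
        rw [List.take_succ_cons, wVec_cons, add_assoc]
      have hg : t.get ⟨l, hl⟩ = (a :: t).get ⟨l + 1, by simpa using hl⟩ := rfl
      have h1 : p + wVec ((a :: t).take (l + 1)) +
          Pi.single ((a :: t).get ⟨l + 1, by simpa using hl⟩) 1 ≤ M := by
        rw [← hidx, ← hg]; exact h
      have := hyp (l + 1) (by simpa using hl) h1
      calc lam.onE ⟨((p + Pi.single a 1) + wVec (t.take l), t.get ⟨l, hl⟩), h⟩
          = lam.onE ⟨(p + wVec ((a :: t).take (l + 1)),
              (a :: t).get ⟨l + 1, by simpa using hl⟩), h1⟩ :=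
            congrArg _ (gridE_eq hidx hg _ _)
        _ = lam'.onE ⟨(p + wVec ((a :: t).take (l + 1)),
              (a :: t).get ⟨l + 1, by simpa using hl⟩), h1⟩ := this
        _ = lam'.onE ⟨((p + Pi.single a 1) + wVec (t.take l), t.get ⟨l, hl⟩), h⟩ :=
            congrArg _ (gridE_eq hidx.symm hg.symm _ _)

lemma agree_append_right {M : Fin k → ℕ} {lam lam' : CGM (grid k M) E} :
    ∀ (u v : List (Fin k)) (p : Fin k → ℕ),
      Agree lam lam' p (u ++ v) → Agree lam lam' (p + wVec u) v := by
  intro u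
  induction u with
  | nil =>
    intro v p h
    refine agree_congr (p := p) ?_ h
    rw [wVec_nil, add_zero]
  | cons a t ih =>
    intro v p h
    have := ih v (p + Pi.single a 1) h.2
    exact agree_congr (by rw [wVec_cons, add_assoc]) this

lemma agree_perm {C : Set (MorphOf E)} (hC : Complete E C) {M : Fin k → ℕ}
    {lam lam' : CGM (grid k M) E}
    (hc1 : CComp E C lam) (hc2 : CComp E C lam')
    {w w' : List (Fin k)} (hp : w.Perm w') :
    ∀ p : Fin k → ℕ, p + wVec w ≤ M → Agree lam lam' p w → Agree lam lam' p w' := by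
  induction hp with
  | nil => intro p _ h; exact h
  | cons a hperm ih =>
    intro p hfit h
    refine ⟨h.1, ih (p + Pi.single a 1) ?_ h.2⟩
    rw [add_assoc, ← wVec_cons]
    exact hfit
  | swap a b l =>
    intro p hfit h
    obtain ⟨hy, hx, ht⟩ := h
    by_cases hab : a = b
    · subst hab
      exact ⟨hy, hx, ht⟩
    · have hsq : p + (Pi.single b 1 + Pi.single a 1) ≤ M := by
        have hword : Pi.single b 1 + Pi.single a 1 ≤ wVec (b :: a :: l) := by
          rw [wVec_cons, wVec_cons, ← add_assoc]
          exact le_self_add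
        exact le_trans (add_le_add (le_refl p) hword) hfit
      obtain ⟨hx', hy'⟩ := square_det hC hc1 hc2 (Ne.symm hab) hsq hy hx
      refine ⟨hx', hy', ?_⟩
      exact agree_congr (by rw [add_assoc, add_assoc, add_comm (Pi.single b 1)]) ht
  | trans h1 h2 ih1 ih2 =>
    intro p hfit hag
    have hv : wVec _ = wVec _ := List.Perm.sum_eq (h1.map (fun i => Pi.single i 1))
    exact ih2 p (by rw [← hv]; exact hfit) (ih1 p hfit hag)

lemma eq_of_agree {C : Set (MorphOf E)} (hC : Complete E C) {M : Fin k → ℕ}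
    {lam lam' : CGM (grid k M) E}
    (hc1 : CComp E C lam) (hc2 : CComp E C lam')
    {w : List (Fin k)} (hw : w ≠ []) (hwv : wVec w = M)
    (hag : Agree lam lam' 0 w) : lam = lam' := by
  have hfit : (0 : Fin k → ℕ) + wVec w ≤ M := by rw [zero_add, hwv]
  -- all edges agree
  have hE : ∀ e : (grid k M).E, lam.onE e = lam'.onE e := by
    rintro ⟨⟨q, j⟩, hq⟩
    set w' := wordOf q ++ j :: wordOf (M - (q + Pi.single j 1)) with hw'
    have hvw' : wVec w' = M := by
      rw [hw', wVec_append, wVec_cons, wVec_wordOf, wVec_wordOf, ← add_assoc,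
        add_tsub_cancel_of_le hq]
    have hperm : w.Perm w' := perm_of_wVec_eq (by rw [hwv, hvw'])
    have hag' := agree_perm hC hc1 hc2 hperm 0 hfit hag
    have htail := agree_append_right (wordOf q) _ 0 hag'
    have hhead := htail.1
    have hidx : (0 : Fin k → ℕ) + wVec (wordOf q) = q := by
      rw [zero_add, wVec_wordOf]
    have h2 : (0 : Fin k → ℕ) + wVec (wordOf q) + Pi.single j 1 ≤ M := by
      rw [hidx]; exact hq
    calc lam.onE ⟨(q, j), hq⟩
        = lam.onE ⟨((0 : Fin k → ℕ) + wVec (wordOf q), j), h2⟩ :=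
          congrArg _ (gridE_eq hidx.symm rfl _ _)
      _ = lam'.onE ⟨((0 : Fin k → ℕ) + wVec (wordOf q), j), h2⟩ := hhead h2
      _ = lam'.onE ⟨(q, j), hq⟩ := congrArg _ (gridE_eq hidx rfl _ _)
  -- all vertices agree
  have hMpos : ∃ a : Fin k, 1 ≤ M a := by
    obtain ⟨a, t, rfl⟩ := List.exists_cons_of_ne_nil hw
    refine ⟨a, ?_⟩
    have h1 : wVec (a :: t) a = 1 + wVec t a := by
      rw [wVec_cons]; simp
    have h2 := congrFun hwv a
    omega
  have hV : ∀ v : (grid k M).V, lam.onV v = lam'.onV v := by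
    rintro ⟨n, hn⟩
    by_cases hnM : n = M
    · obtain ⟨a, haM⟩ := hMpos
      subst hnM
      have hMe : (n - Pi.single a 1) + Pi.single a 1 = n := by
        funext l
        by_cases hl : l = a
        · subst hl; simp [Pi.single_apply]; omega
        · simp [Pi.single_apply, hl]
      have hedge : (n - Pi.single a 1) + Pi.single a 1 ≤ n := le_of_eq hMe
      have h1 := lam.s_comm ⟨(n - Pi.single a 1, a), hedge⟩
      have h2 := lam'.s_comm ⟨(n - Pi.single a 1, a), hedge⟩
      have hvx : ((grid k n).s ⟨(n - Pi.single a 1, a), hedge⟩) = ⟨n, hn⟩ :=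
        Subtype.ext hMe
      rw [hvx] at h1 h2
      rw [← h1, ← h2]; exact congrArg E.s (hE _)
    · have hex : ∃ i, n i < M i := by
        by_contra hcon
        push_neg at hcon
        exact hnM (le_antisymm hn hcon)
      obtain ⟨i, hi⟩ := hex
      have hedge : n + Pi.single i 1 ≤ M := by
        intro l
        by_cases hl : l = i
        · subst hl; simp [Pi.single_apply]; omega
        · simpa [Pi.single_apply, hl] using hn l
      have h1 := lam.r_comm ⟨(n, i), hedge⟩
      have h2 := lam'.r_comm ⟨(n, i), hedge⟩
      have hvx : ((grid k M).r ⟨(n, i), hedge⟩) = ⟨n, hn⟩ := Subtype.ext rfl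
      rw [hvx] at h1 h2
      rw [← h1, ← h2]; exact congrArg E.r (hE _)
  exact CGM.ext' (funext hV) (funext hE)

lemma unique_of_traverses {C : Set (MorphOf E)} (hC : Complete E C) {M : Fin k → ℕ}
    {lam lam' : CGM (grid k M) E}
    (hc1 : CComp E C lam) (hc2 : CComp E C lam')
    {x : List E.E} (hx : x ≠ [])
    (t1 : Traverses lam x) (t2 : Traverses lam' x) : lam = lam' := by
  set w := x.map E.c with hwdef
  have hw : w ≠ [] := by
    simpa [hwdef] using hx
  have hwv : wVec w = M := by
    rw [hwdef, ← colourVec_eq_wVec]; exact t1.1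
  apply eq_of_agree hC hc1 hc2 hw hwv
  apply agree_of_forall
  intro l hl h
  have hlx : l < x.length := by simpa [hwdef] using hl
  obtain ⟨ha1, he1⟩ := t1.2 l hlx
  obtain ⟨ha2, he2⟩ := t2.2 l hlx
  have hq : colourVec E (x.take l) = 0 + wVec (w.take l) := by
    rw [zero_add, hwdef, ← List.map_take, ← colourVec_eq_wVec]
  have hcg : E.c (x.get ⟨l, hlx⟩) = w.get ⟨l, hl⟩ := by
    simp [hwdef]
  have hh1 : colourVec E (x.take l) + Pi.single (E.c (x.get ⟨l, hlx⟩)) 1 ≤ M := ha1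
  calc lam.onE ⟨(0 + wVec (w.take l), w.get ⟨l, hl⟩), h⟩
      = lam.onE ⟨(colourVec E (x.take l), E.c (x.get ⟨l, hlx⟩)), hh1⟩ :=
        congrArg _ (gridE_eq hq.symm hcg.symm _ _)
    _ = x.get ⟨l, hlx⟩ := he1
    _ = lam'.onE ⟨(colourVec E (x.take l), E.c (x.get ⟨l, hlx⟩)), ha2⟩ := he2.symm
    _ = lam'.onE ⟨(0 + wVec (w.take l), w.get ⟨l, hl⟩), h⟩ :=
        congrArg _ (gridE_eq hq hcg _ _)

end Aux3

section Aux4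
variable {k : ℕ} {E : ColouredGraph k} {C : Set (MorphOf E)}

lemma gridV_eq {M : Fin k → ℕ} {q q' : Fin k → ℕ} (h : q = q')
    (hq : q ≤ M) (hq' : q' ≤ M) :
    (⟨q, hq⟩ : (grid k M).V) = ⟨q', hq'⟩ := Subtype.ext h

lemma seg_mono_eq {x y : LamInfPath E C} {M : Fin k → ℕ}
    (h : x.seg 0 M (zero_le) = y.seg 0 M (zero_le))
    {m : Fin k → ℕ} (hm : m ≤ M) :
    x.seg 0 m (zero_le) = y.seg 0 m (zero_le) := by
  rw [← x.coh1 0 m M (zero_le) hm, ← y.coh1 0 m M (zero_le) hm]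
  exact congrArg (fun t => restrictTo t 0 (m - 0) (tsub_le_restrict (zero_le) hm)) h

lemma lamInfPath_ext {x y : LamInfPath E C}
    (h : ∀ M, x.seg 0 M (zero_le) = y.seg 0 M (zero_le)) : x = y := by
  have hall : x.seg = y.seg := by
    funext p q hpq
    rw [← x.coh2 0 p q (zero_le) hpq, ← y.coh2 0 p q (zero_le) hpq]
    exact congrArg
      (fun t => restrictTo t (p - 0) (q - p) (tsub_chain_bound (zero_le) hpq)) (h q)
  obtain ⟨xs, xc, x1, x2⟩ := x
  obtain ⟨ys, yc, y1, y2⟩ := y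
  dsimp only at hall
  subst hall
  rfl

/-- The cyclic colour word. -/
def cw {k : ℕ} (hk : 0 < k) (n : ℕ) : Fin k := ⟨n % k, Nat.mod_lt n hk⟩

/-- Partial sums of the cyclic colour word. -/
def stair {k : ℕ} (hk : 0 < k) : ℕ → (Fin k → ℕ)
  | 0 => 0
  | n + 1 => stair hk n + Pi.single (cw hk n) 1

lemma stair_succ (hk : 0 < k) (n : ℕ) :
    stair hk (n + 1) = stair hk n + Pi.single (cw hk n) 1 := rfl

lemma stair_mono (hk : 0 < k) : Monotone (stair hk) :=
  monotone_nat_of_le_succ (fun n => by rw [stair_succ]; exact le_self_add)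

lemma cw_exists (hk : 0 < k) (n : ℕ) (i : Fin k) :
    ∃ j, j < k ∧ cw hk (n + j) = i := by
  set r := n % k with hr
  have hrk : r < k := Nat.mod_lt n hk
  by_cases hir : r ≤ i.val
  · refine ⟨i.val - r, by omega, ?_⟩
    apply Fin.ext
    show (n + (i.val - r)) % k = i.val
    rw [Nat.add_mod, ← hr, Nat.mod_eq_of_lt (show i.val - r < k by omega)]
    rw [Nat.mod_eq_of_lt (show r + (i.val - r) < k by omega)]
    omega
  · refine ⟨i.val + k - r, by omega, ?_⟩
    apply Fin.ext
    show (n + (i.val + k - r)) % k = i.val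
    rw [Nat.add_mod, ← hr, Nat.mod_eq_of_lt (show i.val + k - r < k by omega)]
    have : r + (i.val + k - r) = i.val + k := by omega
    rw [this, Nat.add_mod_right, Nat.mod_eq_of_lt i.isLt]

lemma stair_cycle (hk : 0 < k) (n : ℕ) (i : Fin k) :
    stair hk n i + 1 ≤ stair hk (n + k) i := by
  obtain ⟨j, hj, hcw⟩ := cw_exists hk n i
  have h1 : stair hk n i ≤ stair hk (n + j) i := stair_mono hk (by omega) i
  have h2 : stair hk (n + j + 1) i = stair hk (n + j) i + 1 := by
    rw [stair_succ]
    simp [hcw, Pi.single_apply]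
  have h3 : stair hk (n + j + 1) i ≤ stair hk (n + k) i := stair_mono hk (by omega) i
  omega

lemma stair_unbounded (hk : 0 < k) (m : Fin k → ℕ) :
    ∃ n, 1 ≤ n ∧ m ≤ stair hk n := by
  have key : ∀ (t : ℕ) (i : Fin k), t ≤ stair hk (t * k) i := by
    intro t
    induction t with
    | zero => intro i; simp
    | succ s ih =>
      intro i
      have h1 := stair_cycle hk (s * k) i
      have h2 : (s + 1) * k = s * k + k := by ring
      rw [h2]
      have := ih i
      omega
  refine ⟨((∑ i : Fin k, m i) + 1) * k, ?_, ?_⟩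
  · have : 1 * 1 ≤ ((∑ i : Fin k, m i) + 1) * k := Nat.mul_le_mul (by omega) hk
    omega
  · intro i
    have h1 : m i ≤ ∑ j : Fin k, m j :=
      Finset.single_le_sum (fun j _ => Nat.zero_le (m j)) (Finset.mem_univ i)
    have h3 : m i ≤ (∑ j : Fin k, m j) + 1 := by omega
    exact le_trans h3 (key _ i)

lemma liftE_bound (hk : 0 < k) (x : LamInfPath E C) (n : ℕ) :
    stair hk n + Pi.single (cw hk n) 1 ≤ stair hk (n + 1) - 0 := by
  rw [tsub_zero, stair_succ]

/-- The canonical coloured lift of an infinite `Λ`-path. -/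
def liftE (hk : 0 < k) (x : LamInfPath E C) (n : ℕ) : E.E :=
  (x.seg 0 (stair hk (n + 1)) (zero_le)).onE
    ⟨(stair hk n, cw hk n), liftE_bound hk x n⟩

lemma liftE_eq (hk : 0 < k) (x : LamInfPath E C) {n N : ℕ} (h : n < N)
    (hb : stair hk n + Pi.single (cw hk n) 1 ≤ stair hk N - 0) :
    liftE hk x n = (x.seg 0 (stair hk N) (zero_le)).onE
      ⟨(stair hk n, cw hk n), hb⟩ := by
  have hmono : stair hk (n + 1) ≤ stair hk N := stair_mono hk h
  have hc := x.coh1 0 (stair hk (n + 1)) (stair hk N) (zero_le) hmono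
  show (x.seg 0 (stair hk (n + 1)) (zero_le)).onE _ = _
  rw [← hc]
  show (x.seg 0 (stair hk N) _).onE ⟨(0 + stair hk n, cw hk n), _⟩ = _
  exact congrArg _ (gridE_eq (zero_add _) rfl _ _)

lemma liftE_c (hk : 0 < k) (x : LamInfPath E C) (n : ℕ) :
    E.c (liftE hk x n) = cw hk n :=
  (x.seg 0 (stair hk (n + 1)) (zero_le)).c_comm _

lemma liftE_chain (hk : 0 < k) (x : LamInfPath E C) (n : ℕ) :
    E.s (liftE hk x n) = E.r (liftE hk x (n + 1)) := by
  have hb1 : stair hk n + Pi.single (cw hk n) 1 ≤ stair hk (n + 2) - 0 := by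
    rw [tsub_zero, ← stair_succ]
    exact stair_mono hk (by omega)
  have hb2 : stair hk (n + 1) + Pi.single (cw hk (n + 1)) 1 ≤ stair hk (n + 2) - 0 := by
    rw [tsub_zero, ← stair_succ]
  rw [liftE_eq hk x (show n < n + 2 by omega) hb1,
    liftE_eq hk x (show n + 1 < n + 2 by omega) hb2]
  refine ((x.seg 0 (stair hk (n + 2)) (zero_le)).s_comm _).trans
    (Eq.trans ?_ ((x.seg 0 (stair hk (n + 2)) (zero_le)).r_comm _).symm)
  apply congrArg
  exact gridV_eq (stair_succ hk n).symm _ _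

/-- The canonical lift as an infinite coloured path. -/
def liftPath (hk : 0 < k) (x : LamInfPath E C) : InfCPath E := by
  refine ⟨liftE hk x, liftE_chain hk x, ?_⟩
  intro i
  apply Set.infinite_of_injective_forall_mem
    (f := fun t : ℕ => i.val + t * k)
  · intro a b hab
    simp only at hab
    have := Nat.eq_of_mul_eq_mul_right hk (by omega : a * k = b * k)
    exact this
  · intro t
    show E.c (liftE hk x (i.val + t * k)) = i
    rw [liftE_c]
    apply Fin.ext
    show (i.val + t * k) % k = i.val
    rw [Nat.add_mul_mod_self_right, Nat.mod_eq_of_lt i.isLt]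

lemma colourVec_append (u v : List E.E) :
    colourVec E (u ++ v) = colourVec E u + colourVec E v := by
  simp [colourVec]

lemma takeList_succ (f : ℕ → E.E) (n : ℕ) :
    takeList f (n + 1) = takeList f n ++ [f n] := by
  rw [takeList, List.ofFn_succ', List.concat_eq_append]
  simp [takeList]

lemma takeList_colourVec (hk : 0 < k) (x : LamInfPath E C) (n : ℕ) :
    colourVec E (takeList (liftE hk x) n) = stair hk n := by
  induction n with
  | zero => simp [takeList, colourVec]; rfl
  | succ m ih =>
    rw [takeList_succ, colourVec_append, ih, stair_succ]
    congr 1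
    simp [colourVec, liftE_c]

lemma takeList_take (f : ℕ → E.E) {l n : ℕ} (h : l ≤ n) :
    (takeList f n).take l = takeList f l := by
  apply List.ext_getElem
  · simp [takeList]
    omega
  · intro i h1 h2
    simp [takeList, List.getElem_take]

lemma takeList_get (f : ℕ → E.E) {n l : ℕ} (hl : l < (takeList f n).length) :
    (takeList f n).get ⟨l, hl⟩ = f l := by
  simp [takeList]

lemma takeList_length (f : ℕ → E.E) (n : ℕ) : (takeList f n).length = n := by
  simp [takeList]

lemma lift_traverses (hk : 0 < k) (x : LamInfPath E C) (n : ℕ) :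
    Traverses (x.seg 0 (stair hk n) (zero_le)) (takeList (liftE hk x) n) := by
  constructor
  · rw [takeList_colourVec, tsub_zero]
  · intro l hl
    have hln : l < n := by rw [takeList_length] at hl; exact hl
    have hg : (takeList (liftE hk x) n).get ⟨l, hl⟩ = liftE hk x l := takeList_get _ _
    have hq : colourVec E ((takeList (liftE hk x) n).take l) = stair hk l := by
      rw [takeList_take _ (le_of_lt hln), takeList_colourVec]
    have hcg : E.c ((takeList (liftE hk x) n).get ⟨l, hl⟩) = cw hk l := by
      rw [hg, liftE_c]
    have hb : stair hk l + Pi.single (cw hk l) 1 ≤ stair hk n - 0 := by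
      rw [tsub_zero, ← stair_succ]
      exact stair_mono hk hln
    have hb2 : colourVec E ((takeList (liftE hk x) n).take l) +
        Pi.single (E.c ((takeList (liftE hk x) n).get ⟨l, hl⟩)) 1 ≤ stair hk n - 0 := by
      rw [hq, hcg]; exact hb
    refine ⟨hb2, ?_⟩
    rw [show ((⟨(colourVec E ((takeList (liftE hk x) n).take l),
        E.c ((takeList (liftE hk x) n).get ⟨l, hl⟩)), hb2⟩ : (grid k (stair hk n - 0)).E))
        = ⟨(stair hk l, cw hk l), hb⟩ from gridE_eq hq hcg _ _]
    rw [hg, liftE_eq hk x hln hb]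

end Aux4

section Aux5
variable {k : ℕ} {E : ColouredGraph k} {C : Set (MorphOf E)}

lemma takeList_congr {f g : ℕ → E.E} {n : ℕ} (h : ∀ l, l < n → f l = g l) :
    takeList f n = takeList g n :=
  congrArg List.ofFn (funext fun i => h i i.isLt)

lemma takeList_ne_nil {f : ℕ → E.E} {n : ℕ} (hn : 1 ≤ n) : takeList f n ≠ [] := by
  intro hcon
  have := congrArg List.length hcon
  rw [takeList_length] at this
  simp at this
  omega

lemma cyl_open (g : ℕ → E.E) (n : ℕ) :
    @IsOpen (ℕ → E.E) (@Pi.topologicalSpace ℕ (fun _ => E.E) (fun _ => ⊥))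
      {f : ℕ → E.E | ∀ l, l < n → f l = g l} := by
  letI : TopologicalSpace E.E := ⊥
  haveI : DiscreteTopology E.E := ⟨rfl⟩
  have heq : {f : ℕ → E.E | ∀ l, l < n → f l = g l}
      = ⋂ l ∈ Finset.range n, {f : ℕ → E.E | f l = g l} := by
    ext f
    simp [Finset.mem_range]
  rw [heq]
  apply isOpen_biInter_finset
  intro l _
  have hcont : Continuous (fun f : ℕ → E.E => f l) := continuous_apply l
  exact hcont.isOpen_preimage ({g l} : Set E.E) (isOpen_discrete _)

lemma open_of_cylinders {A : Set (InfCPath E)}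
    (h : ∀ y ∈ A, ∃ n : ℕ, ∀ z : InfCPath E, (∀ l, l < n → z.1 l = y.1 l) → z ∈ A) :
    @IsOpen _ (infTop E) A := by
  letI : TopologicalSpace E.E := ⊥
  choose n hn using h
  show @IsOpen _ (TopologicalSpace.induced (Subtype.val : InfCPath E → ℕ → E.E)
    Pi.topologicalSpace) A
  refine isOpen_induced_iff.mpr ?_
  refine ⟨⋃ (y : InfCPath E) (hy : y ∈ A), {f | ∀ l, l < n y hy → f l = y.1 l}, ?_, ?_⟩
  · apply isOpen_iUnion
    intro y
    apply isOpen_iUnion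
    intro hy
    exact cyl_open y.1 (n y hy)
  · ext z
    simp only [Set.mem_preimage, Set.mem_iUnion]
    constructor
    · rintro ⟨y, hy, hagree⟩
      exact hn y hy z hagree
    · intro hz
      exact ⟨z, hz, fun l _ => rfl⟩

lemma mem_open_cylinder {A : Set (InfCPath E)} (hA : @IsOpen _ (infTop E) A)
    {y : InfCPath E} (hy : y ∈ A) :
    ∃ n : ℕ, ∀ z : InfCPath E, (∀ l, l < n → z.1 l = y.1 l) → z ∈ A := by
  letI : TopologicalSpace E.E := ⊥
  have hA' : @IsOpen _ (TopologicalSpace.induced (Subtype.val : InfCPath E → ℕ → E.E)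
      Pi.topologicalSpace) A := hA
  replace hA' := isOpen_induced_iff.mp hA'
  obtain ⟨W, hW, hWA⟩ := hA'
  subst hWA
  obtain ⟨I, u, hu, hsub⟩ := isOpen_pi_iff.mp hW y.1 hy
  refine ⟨I.sup id + 1, fun z hz => ?_⟩
  show z.1 ∈ W
  apply hsub
  intro i hi
  have hlt : i < I.sup id + 1 := by
    have : id i ≤ I.sup id := Finset.le_sup (Finset.mem_coe.mp hi)
    simpa using Nat.lt_succ_of_le this
  rw [hz i hlt]
  exact (hu i (Finset.mem_coe.mp hi)).2

lemma colourVec_takeList_succ (f : ℕ → E.E) (n : ℕ) :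
    colourVec E (takeList f (n + 1))
      = colourVec E (takeList f n) + Pi.single (E.c (f n)) 1 := by
  rw [takeList_succ, colourVec_append]
  congr 1

lemma exists_front (y : InfCPath E) (m : Fin k → ℕ) :
    ∃ n, 1 ≤ n ∧ m ≤ colourVec E (takeList y.1 n) := by
  have hmono : ∀ a b : ℕ, a ≤ b →
      colourVec E (takeList y.1 a) ≤ colourVec E (takeList y.1 b) := by
    have step : ∀ n, colourVec E (takeList y.1 n) ≤ colourVec E (takeList y.1 (n + 1)) := by
      intro n
      rw [colourVec_takeList_succ]
      exact le_self_add
    exact fun a b hab => monotone_nat_of_le_succ step hab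
  have grow : ∀ (i : Fin k) (c : ℕ), ∃ n, c ≤ colourVec E (takeList y.1 n) i := by
    intro i c
    induction c with
    | zero => exact ⟨0, Nat.zero_le _⟩
    | succ d ih =>
      obtain ⟨n, hn⟩ := ih
      obtain ⟨b, hbS, hbn⟩ := (y.2.2 i).exists_gt n
      refine ⟨b + 1, ?_⟩
      have h1 := congrFun (colourVec_takeList_succ y.1 b) i
      have h2 : colourVec E (takeList y.1 n) i ≤ colourVec E (takeList y.1 b) i :=
        hmono n b (le_of_lt hbn) i
      have h3 : (Pi.single (E.c (y.1 b)) 1 : Fin k → ℕ) i = 1 := by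
        rw [show E.c (y.1 b) = i from hbS]
        simp
      simp only [Pi.add_apply, h3] at h1
      omega
  have haux : ∀ s : Finset (Fin k), ∃ n, ∀ i ∈ s, m i ≤ colourVec E (takeList y.1 n) i := by
    intro s
    induction s using Finset.induction_on with
    | empty => exact ⟨0, by simp⟩
    | @insert a s ha ih =>
      obtain ⟨n1, h1⟩ := ih
      obtain ⟨n2, h2⟩ := grow a (m a)
      refine ⟨max n1 n2, ?_⟩
      intro i hi
      rcases Finset.mem_insert.mp hi with rfl | his
      · exact le_trans h2 (hmono n2 (max n1 n2) (le_max_right _ _) i)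
      · exact le_trans (h1 i his) (hmono n1 _ (le_max_left _ _) i)
  obtain ⟨n, hn⟩ := haux Finset.univ
  refine ⟨max n 1, by omega, ?_⟩
  intro i
  exact le_trans (hn i (Finset.mem_univ i)) (hmono n _ (le_max_left _ _) i)

lemma seg_eq_of_agree_front (hC : Complete E C)
    (π : InfCPath E → LamInfPath E C)
    (hπ : ∀ (x : InfCPath E) (n : ℕ),
      Traverses ((π x).seg 0 (colourVec E (takeList x.1 n)) (zero_le))
        (takeList x.1 n))
    {z y : InfCPath E} {n : ℕ} (hn : 1 ≤ n)
    (hlist : takeList z.1 n = takeList y.1 n) :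
    (π z).seg 0 (colourVec E (takeList y.1 n)) (zero_le)
      = (π y).seg 0 (colourVec E (takeList y.1 n)) (zero_le) := by
  have t1 := hπ z n
  rw [hlist] at t1
  have t2 := hπ y n
  exact unique_of_traverses hC ((π z).ccomp _ _ _) ((π y).ccomp _ _ _)
    (takeList_ne_nil hn) t1 t2

lemma liftE_congr (hk : 0 < k) {x z : LamInfPath E C} {N l : ℕ}
    (h : z.seg 0 (stair hk N) (zero_le) = x.seg 0 (stair hk N) (zero_le))
    (hl : l < N) : liftE hk z l = liftE hk x l := by
  unfold liftE
  rw [seg_mono_eq h (stair_mono hk hl)]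

lemma pi_lift (hC : Complete E C) (hk : 0 < k)
    (π : InfCPath E → LamInfPath E C)
    (hπ : ∀ (x : InfCPath E) (n : ℕ),
      Traverses ((π x).seg 0 (colourVec E (takeList x.1 n)) (zero_le))
        (takeList x.1 n))
    (x : LamInfPath E C) : π (liftPath hk x) = x := by
  apply lamInfPath_ext
  intro M
  obtain ⟨n, hn1, hnM⟩ := stair_unbounded hk M
  have t1 := hπ (liftPath hk x) n
  have hcv : colourVec E (takeList (liftPath hk x).1 n) = stair hk n :=
    takeList_colourVec hk x n
  rw [hcv] at t1
  have t2 := lift_traverses hk x n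
  have key := unique_of_traverses hC ((π (liftPath hk x)).ccomp 0 (stair hk n) (zero_le))
    (x.ccomp 0 (stair hk n) (zero_le)) (takeList_ne_nil hn1) t1 t2
  exact seg_mono_eq key hnM

end Aux5

/-- For `Λ = Λ_{(E,C)}` row-finite with no sources, `U ⊆ Λ^∞` is open iff
`π⁻¹(U)` is open in `E^{∞,k}`: the cylinder topology on `Λ^∞` is the quotient
topology induced by the traversal map `π`. -/
theorem infinite_path_space_quotient_topology {k : ℕ} (E : ColouredGraph k)
    (C : Set (MorphOf E)) (hC : Complete E C) (hA : Associative E C)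
    (hRF : ∀ (v : E.V) (i : Fin k), {e : E.E | E.r e = v ∧ E.c e = i}.Finite)
    (hNS : ∀ (v : E.V) (i : Fin k), {e : E.E | E.r e = v ∧ E.c e = i}.Nonempty)
    (π : InfCPath E → LamInfPath E C)
    (hπ : ∀ (x : InfCPath E) (n : ℕ),
      Traverses ((π x).seg 0 (colourVec E (takeList x.1 n)) (zero_le))
        (takeList x.1 n))
    (U : Set (LamInfPath E C)) :
    @IsOpen _ (lamTop E C) U ↔ @IsOpen _ (infTop E) (π ⁻¹' U) := by
  letI : TopologicalSpace (LamInfPath E C) := lamTop E C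
  letI : TopologicalSpace (InfCPath E) := infTop E
  constructor
  · intro hU
    by_cases hk : 0 < k
    · have hU' : TopologicalSpace.GenerateOpen
          {S | ∃ (m : Fin k → ℕ) (μ : CGM (grid k m) E),
            S = {x : LamInfPath E C |
              (⟨m - 0, x.seg 0 m (zero_le)⟩ : MorphOf E) = ⟨m, μ⟩}} U := hU
      clear hU
      induction hU' with
      | basic S hS =>
        obtain ⟨m, μ, rfl⟩ := hS
        apply open_of_cylinders
        intro y hy
        obtain ⟨n, hn1, hnm⟩ := exists_front y m
        refine ⟨n, fun z hz => ?_⟩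
        have hlist : takeList z.1 n = takeList y.1 n := takeList_congr hz
        have key := seg_eq_of_agree_front hC π hπ hn1 hlist
        have hseg := seg_mono_eq key hnm
        show (⟨m - 0, (π z).seg 0 m (zero_le)⟩ : MorphOf E) = ⟨m, μ⟩
        rw [hseg]
        exact hy
      | univ =>
        rw [Set.preimage_univ]
        exact isOpen_univ
      | inter S T hS hT ihS ihT =>
        rw [Set.preimage_inter]
        exact ihS.inter ihT
      | sUnion S hS ih =>
        rw [Set.preimage_sUnion]
        exact isOpen_biUnion fun s hs => ih s hs
    · have hempty : IsEmpty (InfCPath E) :=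
        ⟨fun y => absurd (E.c (y.1 0)).isLt (by omega)⟩
      have hpe : π ⁻¹' U = ∅ := Set.eq_empty_of_isEmpty _
      rw [hpe]
      exact isOpen_empty
  · intro hpre
    rw [isOpen_iff_forall_mem_open]
    intro x hx
    by_cases hk : 0 < k
    · have hyA : liftPath hk x ∈ π ⁻¹' U := by
        show π (liftPath hk x) ∈ U
        rw [pi_lift hC hk π hπ x]
        exact hx
      obtain ⟨n₀, hcyl⟩ := mem_open_cylinder hpre hyA
      have e : stair hk n₀ - 0 = stair hk n₀ := tsub_zero _
      refine ⟨{z : LamInfPath E C |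
        (⟨stair hk n₀ - 0, z.seg 0 (stair hk n₀) (zero_le)⟩ : MorphOf E)
          = ⟨stair hk n₀, e ▸ (x.seg 0 (stair hk n₀) (zero_le))⟩}, ?_, ?_, ?_⟩
      · intro z hz
        have hz' : (⟨stair hk n₀ - 0, z.seg 0 (stair hk n₀) (zero_le)⟩ : MorphOf E)
            = ⟨stair hk n₀ - 0, x.seg 0 (stair hk n₀) (zero_le)⟩ :=
          hz.trans (morphOf_mk_eq e _).symm
        have hseg := morphOf_snd_inj hz'
        have hag : ∀ l, l < n₀ → (liftPath hk z).1 l = (liftPath hk x).1 l :=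
          fun l hl => liftE_congr hk hseg hl
        have hz2 : π (liftPath hk z) ∈ U := hcyl (liftPath hk z) hag
        rw [pi_lift hC hk π hπ z] at hz2
        exact hz2
      · exact TopologicalSpace.isOpen_generateFrom_of_mem
          ⟨stair hk n₀, e ▸ (x.seg 0 (stair hk n₀) (zero_le)), rfl⟩
      · exact morphOf_mk_eq e _
    · have e0 : (0 : Fin k → ℕ) - 0 = 0 := tsub_zero _
      refine ⟨{z : LamInfPath E C |
        (⟨(0 : Fin k → ℕ) - 0, z.seg 0 0 (zero_le)⟩ : MorphOf E)
          = ⟨(0 : Fin k → ℕ), e0 ▸ (x.seg 0 0 (zero_le))⟩}, ?_, ?_, ?_⟩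
      · intro z hz
        have hz' : (⟨(0 : Fin k → ℕ) - 0, z.seg 0 0 (zero_le)⟩ : MorphOf E)
            = ⟨(0 : Fin k → ℕ) - 0, x.seg 0 0 (zero_le)⟩ :=
          hz.trans (morphOf_mk_eq e0 _).symm
        have hseg := morphOf_snd_inj hz'
        have hzx : z = x := by
          apply lamInfPath_ext
          intro M
          have hM : M = 0 := funext fun i => absurd i.isLt (by omega)
          subst hM
          exact hseg
        rw [hzx] at hz ⊢
        exact hx
      · exact TopologicalSpace.isOpen_generateFrom_of_mem
          ⟨0, e0 ▸ (x.seg 0 0 (zero_le)), rfl⟩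
      · exact morphOf_mk_eq e0 _

end Paper
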